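/- arXiv:1407.1473 — 2 statements merged into one kernel-verified Lean document; each statement's English description precedes it below -/
import Mathlib

section
/- Let S be a Boolean inverse ∧-monoid. For every s ∈ S, s = φ(s) ∨ s·σ(s), this join is orthogonal (φ(s) ⊥ s·σ(s)), and φ(s·σ(s)) = 0, where φ(s) = s ∧ 1 and σ(s) is the product of the complement of φ(s) in the Boolean algebra E(S) with s⁻¹s. -/
universe u

/-- An inverse monoid with zero: every element `a` has a unique generalized
inverse `a⁻¹`, and `0` is an absorbing element. -/
class InverseMonoidWithZero (S : Type u) extends Monoid S, Zero S, Inv S where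
  zero_mul' : ∀ a : S, 0 * a = 0
  mul_zero' : ∀ a : S, a * 0 = 0
  mul_inv_mul : ∀ a : S, a * a⁻¹ * a = a
  inv_mul_inv : ∀ a : S, a⁻¹ * a * a⁻¹ = a⁻¹
  inv_unique : ∀ a b : S, a * b * a = a → b * a * b = b → b = a⁻¹

section BasicDefs

variable {S : Type u}

/-- The natural partial order: `a ≤ b` iff `a = e * b` for some idempotent `e`. -/
def nle [InverseMonoidWithZero S] (a b : S) : Prop :=
  ∃ e : S, e * e = e ∧ a = e * b

/-- `a` and `b` are compatible if `a * b⁻¹` and `a⁻¹ * b` are idempotents. -/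
def Compat [InverseMonoidWithZero S] (a b : S) : Prop :=
  (a * b⁻¹) * (a * b⁻¹) = a * b⁻¹ ∧ (a⁻¹ * b) * (a⁻¹ * b) = a⁻¹ * b

/-- `a` and `b` are orthogonal if `a * b⁻¹ = 0` and `a⁻¹ * b = 0`. -/
def Orth [InverseMonoidWithZero S] (a b : S) : Prop :=
  a * b⁻¹ = 0 ∧ a⁻¹ * b = 0

end BasicDefs

/-- A distributive inverse monoid: every compatible pair has a join (for the
natural partial order), recorded by `sup`, and multiplication distributes over
these binary joins. -/
class DistributiveInverseMonoid (S : Type u) extends InverseMonoidWithZero S where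
  sup : S → S → S
  le_sup_left : ∀ a b : S, Compat a b → nle a (sup a b)
  le_sup_right : ∀ a b : S, Compat a b → nle b (sup a b)
  sup_le : ∀ a b c : S, Compat a b → nle a c → nle b c → nle (sup a b) c
  mul_sup : ∀ a b c : S, Compat a b → c * sup a b = sup (c * a) (c * b)
  sup_mul : ∀ a b c : S, Compat a b → sup a b * c = sup (a * c) (b * c)

/-- A Boolean inverse monoid: a distributive inverse monoid whose idempotents
form a Boolean algebra under the natural partial order; `compl` records the
complementation on idempotents. -/
class BooleanInverseMonoid (S : Type u) extends DistributiveInverseMonoid S where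
  compl : S → S
  compl_idem : ∀ e : S, e * e = e → compl e * compl e = compl e
  mul_compl : ∀ e : S, e * e = e → e * compl e = 0
  sup_compl : ∀ e : S, e * e = e → sup e (compl e) = 1

/-- A Boolean inverse ∧-monoid: a Boolean inverse monoid in which every pair of
elements has a meet with respect to the natural partial order. -/
class BooleanInverseMeetMonoid (S : Type u) extends BooleanInverseMonoid S where
  inf : S → S → S
  inf_le_left : ∀ a b : S, nle (inf a b) a
  inf_le_right : ∀ a b : S, nle (inf a b) b
  le_inf : ∀ a b c : S, nle c a → nle c b → nle c (inf a b)

section MoreDefs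

variable {S : Type u}

/-- The join of a compatible pair. -/
def bsup [DistributiveInverseMonoid S] (a b : S) : S := DistributiveInverseMonoid.sup a b

/-- Complementation in the Boolean algebra of idempotents. -/
def bcompl [BooleanInverseMonoid S] (e : S) : S := BooleanInverseMonoid.compl e

/-- The binary meet. -/
def binf [BooleanInverseMeetMonoid S] (a b : S) : S := BooleanInverseMeetMonoid.inf a b

/-- The fixed-point operator `φ(s) = s ∧ 1`. -/
def phi [BooleanInverseMeetMonoid S] (s : S) : S := binf s 1

/-- The support operator `σ(s) = \overline{φ(s)} ⋅ s⁻¹ s`. -/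
def sigma [BooleanInverseMeetMonoid S] (s : S) : S := bcompl (phi s) * (s⁻¹ * s)

/-- An infinitesimal is a non-zero element that squares to zero. -/
def Infinitesimal [InverseMonoidWithZero S] (a : S) : Prop := a ≠ 0 ∧ a * a = 0

/-- A (two-sided) ideal. -/
def IsMIdeal [InverseMonoidWithZero S] (I : Set S) : Prop :=
  I.Nonempty ∧ ∀ a ∈ I, ∀ s : S, s * a ∈ I ∧ a * s ∈ I

/-- A ∨-ideal: an ideal closed under joins of compatible pairs. -/
def IsVIdeal [DistributiveInverseMonoid S] (I : Set S) : Prop :=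
  IsMIdeal I ∧ ∀ a ∈ I, ∀ b ∈ I, Compat a b → bsup a b ∈ I

end MoreDefs

/-- 0-simplifying: the only ∨-ideals are `{0}` and `S`. -/
def ZeroSimplifying (S : Type u) [DistributiveInverseMonoid S] : Prop :=
  ∀ I : Set S, IsVIdeal I → I = {0} ∨ I = Set.univ

/-- 0-simple: non-trivial and the only ideals are `{0}` and `S`. -/
def ZeroSimple (S : Type u) [InverseMonoidWithZero S] : Prop :=
  (∃ s : S, s ≠ 0) ∧ ∀ I : Set S, IsMIdeal I → I = {0} ∨ I = Set.univ

/-- Fundamental: every element commuting with all idempotents is an idempotent. -/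
def Fundamental (S : Type u) [InverseMonoidWithZero S] : Prop :=
  ∀ a : S, (∀ e : S, e * e = e → a * e = e * a) → a * a = a

/-- The Boolean algebra of idempotents is atomless. -/
def IdemAtomless (S : Type u) [InverseMonoidWithZero S] : Prop :=
  ∀ e : S, e * e = e → e ≠ 0 → ∃ f : S, f * f = f ∧ f ≠ 0 ∧ nle f e ∧ f ≠ e

section Filters

variable {S : Type u}

/-- A filter in a Boolean inverse ∧-monoid: a nonempty subset closed under
binary meets and upward closed in the natural partial order. -/
def IsMFilter [BooleanInverseMeetMonoid S] (A : Set S) : Prop :=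
  A.Nonempty ∧ (∀ a ∈ A, ∀ b ∈ A, binf a b ∈ A) ∧ ∀ a ∈ A, ∀ b : S, nle a b → b ∈ A

/-- An ultrafilter: a maximal proper filter. -/
def IsMUltrafilter [BooleanInverseMeetMonoid S] (A : Set S) : Prop :=
  IsMFilter A ∧ (0 : S) ∉ A ∧ ∀ B : Set S, IsMFilter B → (0 : S) ∉ B → A ⊆ B → A = B

/-- A filter of the Boolean algebra of idempotents (meet of idempotents is
their product). -/
def IsIdemFilter [InverseMonoidWithZero S] (F : Set S) : Prop :=
  F.Nonempty ∧ (∀ e ∈ F, e * e = e) ∧ (∀ e ∈ F, ∀ f ∈ F, e * f ∈ F) ∧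
    ∀ e ∈ F, ∀ f : S, f * f = f → nle e f → f ∈ F

/-- An ultrafilter of the Boolean algebra of idempotents. -/
def IsIdemUltrafilter [InverseMonoidWithZero S] (F : Set S) : Prop :=
  IsIdemFilter F ∧ (0 : S) ∉ F ∧
    ∀ G : Set S, IsIdemFilter G → (0 : S) ∉ G → F ⊆ G → F = G

end Filters

section PencilDefs

variable {S : Type u}

/-- `Preceq e f`: there is a pencil from `e` to `f`, i.e. finitely many
elements `x₁, …, xₘ` with `r(xᵢ) ≤ f` for all `i` and `e = ⋁ d(xᵢ)`
(a least upper bound for the natural partial order). -/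
def Preceq [DistributiveInverseMonoid S] (e f : S) : Prop :=
  ∃ l : List S, l ≠ [] ∧ (∀ x ∈ l, nle (x * x⁻¹) f) ∧
    (∀ x ∈ l, nle (x⁻¹ * x) e) ∧ ∀ c : S, (∀ x ∈ l, nle (x⁻¹ * x) c) → nle e c

/-- Piecewise factorizable: every element is a finite join of elements each of
which lies beneath a unit. -/
def PiecewiseFactorizable (S : Type u) [DistributiveInverseMonoid S] : Prop :=
  ∀ s : S, ∃ l : List S, l ≠ [] ∧ (∀ x ∈ l, ∃ g : S, IsUnit g ∧ nle x g) ∧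
    (∀ x ∈ l, nle x s) ∧ ∀ c : S, (∀ x ∈ l, nle x c) → nle s c

/-- A properly infinite idempotent. -/
def ProperlyInfinite [DistributiveInverseMonoid S] (e : S) : Prop :=
  ∃ x y : S, x⁻¹ * x = e ∧ y⁻¹ * y = e ∧ Orth (x * x⁻¹) (y * y⁻¹) ∧
    nle (bsup (x * x⁻¹) (y * y⁻¹)) e

end PencilDefs

/-- Purely infinite: every non-zero idempotent is properly infinite. -/
def PurelyInfinite (S : Type u) [DistributiveInverseMonoid S] : Prop :=
  ∀ e : S, e * e = e → e ≠ 0 → ProperlyInfinite e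

section AuxLemmas

variable {S : Type u} [InverseMonoidWithZero S]

lemma aux_inv_eq (a b : S) (h1 : a * b * a = a) (h2 : b * a * b = b) : b = a⁻¹ :=
  InverseMonoidWithZero.inv_unique a b h1 h2

lemma aux_mul_inv_mul (a : S) : a * a⁻¹ * a = a := InverseMonoidWithZero.mul_inv_mul a

lemma aux_inv_mul_inv (a : S) : a⁻¹ * a * a⁻¹ = a⁻¹ := InverseMonoidWithZero.inv_mul_inv a

lemma aux_inv_inv (a : S) : a⁻¹⁻¹ = a :=
  (aux_inv_eq a⁻¹ a (aux_inv_mul_inv a) (aux_mul_inv_mul a)).symm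

lemma aux_idem_inv (e : S) (he : e * e = e) : e⁻¹ = e :=
  (aux_inv_eq e e (by rw [he, he]) (by rw [he, he])).symm

lemma aux_dd_idem (a : S) : (a⁻¹ * a) * (a⁻¹ * a) = a⁻¹ * a := by
  calc (a⁻¹ * a) * (a⁻¹ * a) = (a⁻¹ * a * a⁻¹) * a := by simp only [mul_assoc]
    _ = a⁻¹ * a := by rw [aux_inv_mul_inv]

lemma aux_rr_idem (a : S) : (a * a⁻¹) * (a * a⁻¹) = a * a⁻¹ := by
  calc (a * a⁻¹) * (a * a⁻¹) = (a * a⁻¹ * a) * a⁻¹ := by simp only [mul_assoc]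
    _ = a * a⁻¹ := by rw [aux_mul_inv_mul]

lemma aux_idem_mul (e f : S) (he : e * e = e) (hf : f * f = f) :
    (e * f) * (e * f) = e * f := by
  set x := (e * f)⁻¹ with hx
  have hxa : (e * f) * x * (e * f) = e * f := aux_mul_inv_mul _
  have hxb : x * (e * f) * x = x := aux_inv_mul_inv _
  have h1 : (e * f) * (f * x * e) * (e * f) = e * f := by
    calc (e * f) * (f * x * e) * (e * f)
        = e * ((f * f) * (x * ((e * e) * f))) := by simp only [mul_assoc]
      _ = e * (f * (x * (e * f))) := by rw [hf, he]
      _ = (e * f) * x * (e * f) := by simp only [mul_assoc]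
      _ = e * f := hxa
  have h2 : (f * x * e) * (e * f) * (f * x * e) = f * x * e := by
    calc (f * x * e) * (e * f) * (f * x * e)
        = f * (x * ((e * e) * ((f * f) * (x * e)))) := by simp only [mul_assoc]
      _ = f * (x * (e * (f * (x * e)))) := by rw [he, hf]
      _ = f * (x * (e * f) * x) * e := by simp only [mul_assoc]
      _ = f * x * e := by rw [hxb]
  have hfxe : f * x * e = x := aux_inv_eq (e * f) (f * x * e) h1 h2
  have hxx : x * x = x := by
    conv_lhs => rw [← hfxe]
    calc (f * x * e) * (f * x * e)
        = f * (x * (e * f) * (x * e)) := by simp only [mul_assoc]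
      _ = f * (x * (e * f) * x * e) := by simp only [mul_assoc]
      _ = f * (x * e) := by rw [hxb]
      _ = f * x * e := by simp only [mul_assoc]
      _ = x := hfxe
  have hef : e * f = x := by
    calc e * f = (e * f)⁻¹⁻¹ := (aux_inv_inv _).symm
      _ = x⁻¹ := by rw [← hx]
      _ = x := aux_idem_inv x hxx
  rw [hef]; exact hxx

lemma aux_idem_comm (e f : S) (he : e * e = e) (hf : f * f = f) : e * f = f * e := by
  have hef := aux_idem_mul e f he hf
  have h1 : (e * f) * (f * e) * (e * f) = e * f := by
    calc (e * f) * (f * e) * (e * f)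
        = e * ((f * f) * ((e * e) * f)) := by simp only [mul_assoc]
      _ = e * (f * (e * f)) := by rw [hf, he]
      _ = (e * f) * (e * f) := by simp only [mul_assoc]
      _ = e * f := hef
  have h2 : (f * e) * (e * f) * (f * e) = f * e := by
    calc (f * e) * (e * f) * (f * e)
        = f * ((e * e) * ((f * f) * e)) := by simp only [mul_assoc]
      _ = f * (e * (f * e)) := by rw [he, hf]
      _ = (f * e) * (f * e) := by simp only [mul_assoc]
      _ = f * e := aux_idem_mul f e hf he
  have : f * e = (e * f)⁻¹ := aux_inv_eq (e * f) (f * e) h1 h2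
  rw [this, aux_idem_inv (e * f) hef]

lemma aux_mul_inv_rev (a b : S) : (a * b)⁻¹ = b⁻¹ * a⁻¹ := by
  symm
  apply aux_inv_eq
  · calc (a * b) * (b⁻¹ * a⁻¹) * (a * b)
        = a * ((b * b⁻¹) * (a⁻¹ * a)) * b := by simp only [mul_assoc]
      _ = a * ((a⁻¹ * a) * (b * b⁻¹)) * b := by
          rw [aux_idem_comm (b * b⁻¹) (a⁻¹ * a) (aux_rr_idem b) (aux_dd_idem a)]
      _ = (a * a⁻¹ * a) * (b * b⁻¹ * b) := by simp only [mul_assoc]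
      _ = a * b := by rw [aux_mul_inv_mul, aux_mul_inv_mul]
  · calc (b⁻¹ * a⁻¹) * (a * b) * (b⁻¹ * a⁻¹)
        = b⁻¹ * ((a⁻¹ * a) * (b * b⁻¹)) * a⁻¹ := by simp only [mul_assoc]
      _ = b⁻¹ * ((b * b⁻¹) * (a⁻¹ * a)) * a⁻¹ := by
          rw [aux_idem_comm (a⁻¹ * a) (b * b⁻¹) (aux_dd_idem a) (aux_rr_idem b)]
      _ = (b⁻¹ * b * b⁻¹) * (a⁻¹ * a * a⁻¹) := by simp only [mul_assoc]
      _ = b⁻¹ * a⁻¹ := by rw [aux_inv_mul_inv, aux_inv_mul_inv]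

/-- `a ≤ b` implies `a = a a⁻¹ b`. -/
lemma aux_nle_left {a b : S} (h : nle a b) : a = a * a⁻¹ * b := by
  obtain ⟨g, hg, hab⟩ := h
  have hginv : g⁻¹ = g := aux_idem_inv g hg
  have : a * a⁻¹ * b = g * b := by
    calc a * a⁻¹ * b = (g * b) * (g * b)⁻¹ * b := by rw [← hab]
      _ = (g * b) * (b⁻¹ * g) * b := by rw [aux_mul_inv_rev, hginv]
      _ = g * ((b * b⁻¹) * g) * b := by simp only [mul_assoc]
      _ = g * (g * (b * b⁻¹)) * b := by
          rw [aux_idem_comm (b * b⁻¹) g (aux_rr_idem b) hg]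
      _ = (g * g) * (b * b⁻¹ * b) := by simp only [mul_assoc]
      _ = g * b := by rw [hg, aux_mul_inv_mul]
  rw [this, ← hab]

/-- `a ≤ b` implies `a = b a⁻¹ a`. -/
lemma aux_nle_right {a b : S} (h : nle a b) : a = b * (a⁻¹ * a) := by
  obtain ⟨g, hg, hab⟩ := h
  have hginv : g⁻¹ = g := aux_idem_inv g hg
  have : b * (a⁻¹ * a) = g * b := by
    calc b * (a⁻¹ * a) = b * ((g * b)⁻¹ * (g * b)) := by rw [← hab]
      _ = b * (b⁻¹ * (g * (g * b))) := by rw [aux_mul_inv_rev, hginv]; simp only [mul_assoc]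
      _ = b * (b⁻¹ * ((g * g) * b)) := by simp only [mul_assoc]
      _ = (b * b⁻¹) * (g * b) := by rw [hg]; simp only [mul_assoc]
      _ = ((b * b⁻¹) * g) * b := by simp only [mul_assoc]
      _ = (g * (b * b⁻¹)) * b := by
          rw [aux_idem_comm (b * b⁻¹) g (aux_rr_idem b) hg]
      _ = g * (b * b⁻¹ * b) := by simp only [mul_assoc]
      _ = g * b := by rw [aux_mul_inv_mul]
  rw [this, ← hab]

lemma aux_nle_trans {a b c : S} (h1 : nle a b) (h2 : nle b c) : nle a c := by
  obtain ⟨g, hg, hab⟩ := h1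
  obtain ⟨h, hh, hbc⟩ := h2
  exact ⟨g * h, aux_idem_mul g h hg hh, by rw [hab, hbc, mul_assoc]⟩

lemma aux_nle_one_idem {e : S} (h : nle e 1) : e * e = e := by
  obtain ⟨g, hg, hge⟩ := h
  rw [mul_one] at hge; rw [hge]; exact hg

end AuxLemmas

/-- In a Boolean inverse ∧-monoid, `s = φ(s) ∨ s·σ(s)`, the
join being orthogonal, and `φ(s·σ(s)) = 0`. -/
theorem statement13 (S : Type u) [BooleanInverseMeetMonoid S] (s : S) :
    s = bsup (phi s) (s * sigma s) ∧
    Orth (phi s) (s * sigma s) ∧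
    phi (s * sigma s) = 0 := by
  set e := phi s with he_def
  set c := bcompl e with hc_def
  have he1 : nle e 1 := BooleanInverseMeetMonoid.inf_le_right s 1
  have hes : nle e s := BooleanInverseMeetMonoid.inf_le_left s 1
  have hei : e * e = e := aux_nle_one_idem he1
  have hci : c * c = c := BooleanInverseMonoid.compl_idem e hei
  have hec : e * c = 0 := BooleanInverseMonoid.mul_compl e hei
  have hce : c * e = 0 := by rw [← aux_idem_comm e c hei hci]; exact hec
  have heinv : e⁻¹ = e := aux_idem_inv e hei
  have hcinv : c⁻¹ = c := aux_idem_inv c hci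
  -- e * s = e and s * e = e
  have hes2 : e * s = e := by
    have := aux_nle_left hes
    rw [heinv, hei] at this
    exact this.symm
  have hse : s * e = e := by
    have := aux_nle_right hes
    rw [heinv, hei] at this
    exact this.symm
  -- s * sigma s = s * c
  have hssinv : (s⁻¹ * s) * (s⁻¹ * s) = s⁻¹ * s := aux_dd_idem s
  have hsig : s * sigma s = s * c := by
    show s * (c * (s⁻¹ * s)) = s * c
    rw [aux_idem_comm c (s⁻¹ * s) hci hssinv, ← mul_assoc, ← mul_assoc,
      aux_mul_inv_mul]
  -- compatibility of e and c
  have hcompat : Compat e c := by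
    constructor
    · rw [hcinv, hec, InverseMonoidWithZero.zero_mul']
    · rw [heinv, hec, InverseMonoidWithZero.zero_mul']
  -- Part 1: s = e ∨ s*c
  have hsup1 : DistributiveInverseMonoid.sup e c = 1 := BooleanInverseMonoid.sup_compl e hei
  have part1 : s = bsup (phi s) (s * sigma s) := by
    rw [hsig]
    show s = DistributiveInverseMonoid.sup e (s * c)
    calc s = s * 1 := (mul_one s).symm
      _ = s * DistributiveInverseMonoid.sup e c := by rw [hsup1]
      _ = DistributiveInverseMonoid.sup (s * e) (s * c) :=
          DistributiveInverseMonoid.mul_sup e c s hcompat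
      _ = DistributiveInverseMonoid.sup e (s * c) := by rw [hse]
  -- Part 2: orthogonality
  have part2 : Orth (phi s) (s * sigma s) := by
    rw [hsig]
    constructor
    · show e * (s * c)⁻¹ = 0
      rw [aux_mul_inv_rev, hcinv, ← mul_assoc, hec, InverseMonoidWithZero.zero_mul']
    · show e⁻¹ * (s * c) = 0
      rw [heinv, ← mul_assoc, hes2, hec]
  -- Part 3: phi (s * sigma s) = 0
  have part3 : phi (s * sigma s) = 0 := by
    rw [hsig]
    set f := phi (s * c) with hf_def
    have hf1 : nle f 1 := BooleanInverseMeetMonoid.inf_le_right (s * c) 1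
    have hfsc : nle f (s * c) := BooleanInverseMeetMonoid.inf_le_left (s * c) 1
    have hfi : f * f = f := aux_nle_one_idem hf1
    have hfinv : f⁻¹ = f := aux_idem_inv f hfi
    -- s * c ≤ s
    have hscs : nle (s * c) s := by
      refine ⟨s * c * s⁻¹, ?_, ?_⟩
      · calc (s * c * s⁻¹) * (s * c * s⁻¹)
            = s * (c * (s⁻¹ * s) * (c * s⁻¹)) := by simp only [mul_assoc]
          _ = s * ((s⁻¹ * s) * c * (c * s⁻¹)) := by
              rw [aux_idem_comm c (s⁻¹ * s) hci hssinv]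
          _ = s * ((s⁻¹ * s) * ((c * c) * s⁻¹)) := by simp only [mul_assoc]
          _ = s * (s⁻¹ * s) * (c * s⁻¹) := by rw [hci]; simp only [mul_assoc]
          _ = s * c * s⁻¹ := by rw [← mul_assoc s s⁻¹ s, aux_mul_inv_mul, ← mul_assoc]
      · calc s * c = s * ((s⁻¹ * s) * c) := by
              rw [← mul_assoc, ← mul_assoc, aux_mul_inv_mul]
          _ = s * (c * (s⁻¹ * s)) := by rw [aux_idem_comm (s⁻¹ * s) c hssinv hci]
          _ = (s * c * s⁻¹) * s := by simp only [mul_assoc]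
    have hfs : nle f s := aux_nle_trans hfsc hscs
    have hfe : nle f e := BooleanInverseMeetMonoid.le_inf s 1 f hfs hf1
    -- f = f * e, hence f = e * f
    have h1 : f = f * e := by
      have := aux_nle_left hfe
      rwa [hfinv, hfi] at this
    have h2 : f = e * f := by
      rw [h1]
      conv_lhs => rw [aux_idem_comm f e hfi hei]
      rw [← h1]
    -- f = s * c * f
    have h3 : f = s * c * f := by
      have := aux_nle_right hfsc
      rwa [hfinv, hfi] at this
    calc f = e * f := h2
      _ = e * (s * c * f) := by rw [← h3]
      _ = (e * s) * c * f := by simp only [mul_assoc]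
      _ = e * c * f := by rw [hes2]
      _ = 0 := by rw [hec, InverseMonoidWithZero.zero_mul']
  exact ⟨part1, part2, part3⟩
end

section
/- Let S be a Tarski monoid and let e and f be non-zero idempotents with e ⪯ f. Then there exist elements x₁, ..., xₘ ∈ S such that r(xᵢ) ≤ f for all i and e = d(x₁) ∨ ... ∨ d(xₘ), where the idempotents d(x₁), ..., d(xₘ) are pairwise orthogonal. -/
universe u

section Aux

variable {S : Type u}

private lemma mii [InverseMonoidWithZero S] (a : S) : a * a⁻¹ * a = a :=
  InverseMonoidWithZero.mul_inv_mul a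

private lemma imi [InverseMonoidWithZero S] (a : S) : a⁻¹ * a * a⁻¹ = a⁻¹ :=
  InverseMonoidWithZero.inv_mul_inv a

private lemma my_inv_inv [InverseMonoidWithZero S] (a : S) : a⁻¹⁻¹ = a :=
  (InverseMonoidWithZero.inv_unique a⁻¹ a (imi a) (mii a)).symm

private lemma idem_inv [InverseMonoidWithZero S] {e : S} (he : e * e = e) : e⁻¹ = e :=
  (InverseMonoidWithZero.inv_unique e e (by rw [he, he]) (by rw [he, he])).symm

private lemma dIdem [InverseMonoidWithZero S] (x : S) : (x⁻¹ * x) * (x⁻¹ * x) = x⁻¹ * x := by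
  rw [mul_assoc, ← mul_assoc x, mii]

private lemma rIdem [InverseMonoidWithZero S] (x : S) : (x * x⁻¹) * (x * x⁻¹) = x * x⁻¹ := by
  rw [mul_assoc, ← mul_assoc x⁻¹, imi]

private lemma absorb [InverseMonoidWithZero S] {e : S} (he : e * e = e) (z : S) :
    e * (e * z) = e * z := by rw [← mul_assoc, he]

private lemma idem_mul_idem [InverseMonoidWithZero S] {e f : S} (he : e * e = e)
    (hf : f * f = f) : (e * f) * (e * f) = e * f := by
  have key := mii (e * f)
  simp only [mul_assoc] at key
  have key2' : ∀ z : S, (e*f)⁻¹ * (e * (f * ((e*f)⁻¹ * z))) = (e*f)⁻¹ * z := by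
    intro z
    have := congrArg (fun w => w * z) (imi (e * f))
    simpa only [mul_assoc] using this
  have h1 : (e * f) * (f * (e*f)⁻¹ * e) * (e * f) = e * f := by
    simp only [mul_assoc]
    rw [absorb hf, absorb he]
    simpa only [mul_assoc] using key
  have h2 : (f * (e*f)⁻¹ * e) * (e * f) * (f * (e*f)⁻¹ * e) = f * (e*f)⁻¹ * e := by
    simp only [mul_assoc]
    rw [absorb he, absorb hf, key2' (e : S)]
  have h3 : f * (e*f)⁻¹ * e = (e * f)⁻¹ :=
    InverseMonoidWithZero.inv_unique _ _ h1 h2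
  have h4 : (e * f)⁻¹ * (e * f)⁻¹ = (e * f)⁻¹ := by
    conv_lhs => rw [← h3]
    conv_rhs => rw [← h3]
    simp only [mul_assoc]
    rw [key2' (e : S)]
  have h6 : e * f = (e * f)⁻¹ := (my_inv_inv (e * f)).symm.trans (idem_inv h4)
  rw [h6]; exact h4

private lemma idem_comm [InverseMonoidWithZero S] {e f : S} (he : e * e = e)
    (hf : f * f = f) : e * f = f * e := by
  have hef := idem_mul_idem he hf
  have hfe := idem_mul_idem hf he
  have h1 : (e * f) * (f * e) * (e * f) = e * f := by
    simp only [mul_assoc]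
    rw [absorb hf, absorb he]
    simpa only [mul_assoc] using hef
  have h2 : (f * e) * (e * f) * (f * e) = f * e := by
    simp only [mul_assoc]
    rw [absorb he, absorb hf]
    simpa only [mul_assoc] using hfe
  have h3 : f * e = (e * f)⁻¹ := InverseMonoidWithZero.inv_unique _ _ h1 h2
  rw [h3, idem_inv hef]

private lemma nle_refl [InverseMonoidWithZero S] (a : S) : nle a a :=
  ⟨a * a⁻¹, rIdem a, (mii a).symm⟩

private lemma nle_trans [InverseMonoidWithZero S] {a b c : S} (h1 : nle a b)
    (h2 : nle b c) : nle a c := by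
  obtain ⟨g, hg, hab⟩ := h1
  obtain ⟨k, hk, hbc⟩ := h2
  exact ⟨g * k, idem_mul_idem hg hk, by rw [hab, hbc, mul_assoc]⟩

private lemma zero_nle [InverseMonoidWithZero S] (a : S) : nle 0 a :=
  ⟨0, InverseMonoidWithZero.zero_mul' 0, (InverseMonoidWithZero.zero_mul' a).symm⟩

private lemma zero_idem [InverseMonoidWithZero S] : (0 : S) * 0 = 0 :=
  InverseMonoidWithZero.zero_mul' 0

private lemma mul_eq_of_nle [InverseMonoidWithZero S] {e f : S} (hf : f * f = f)
    (h : nle e f) : e * f = e := by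
  obtain ⟨g, _, hef⟩ := h
  rw [hef, mul_assoc, hf]

private lemma nle_of_mul_eq [InverseMonoidWithZero S] {e f : S} (he : e * e = e)
    (h : e * f = e) : nle e f := ⟨e, he, h.symm⟩

private lemma nle_one_of_idem [InverseMonoidWithZero S] {e : S} (he : e * e = e) :
    nle e 1 := ⟨e, he, (mul_one e).symm⟩

private lemma idem_of_nle_one [InverseMonoidWithZero S] {s : S} (h : nle s 1) :
    s * s = s := by
  obtain ⟨g, hg, hs⟩ := h
  rw [mul_one] at hs
  rw [hs]; exact hg

private lemma idem_compat [InverseMonoidWithZero S] {e f : S} (he : e * e = e)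
    (hf : f * f = f) : Compat e f :=
  ⟨by rw [idem_inv hf]; exact idem_mul_idem he hf,
   by rw [idem_inv he]; exact idem_mul_idem he hf⟩

private lemma bsup_idem [DistributiveInverseMonoid S] {e f : S} (he : e * e = e)
    (hf : f * f = f) : bsup e f * bsup e f = bsup e f :=
  idem_of_nle_one (DistributiveInverseMonoid.sup_le e f 1 (idem_compat he hf)
    (nle_one_of_idem he) (nle_one_of_idem hf))

private lemma nle_bsup_left [DistributiveInverseMonoid S] {e f : S} (he : e * e = e)
    (hf : f * f = f) : nle e (bsup e f) :=
  DistributiveInverseMonoid.le_sup_left e f (idem_compat he hf)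

private lemma nle_bsup_right [DistributiveInverseMonoid S] {e f : S} (he : e * e = e)
    (hf : f * f = f) : nle f (bsup e f) :=
  DistributiveInverseMonoid.le_sup_right e f (idem_compat he hf)

private lemma bsup_nle [DistributiveInverseMonoid S] {e f c : S} (he : e * e = e)
    (hf : f * f = f) (h1 : nle e c) (h2 : nle f c) : nle (bsup e f) c :=
  DistributiveInverseMonoid.sup_le e f c (idem_compat he hf) h1 h2

private lemma bcompl_idem [BooleanInverseMonoid S] {e : S} (he : e * e = e) :
    bcompl e * bcompl e = bcompl e := BooleanInverseMonoid.compl_idem e he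

private lemma mul_bcompl [BooleanInverseMonoid S] {e : S} (he : e * e = e) :
    e * bcompl e = 0 := BooleanInverseMonoid.mul_compl e he

private lemma bsup_bcompl [BooleanInverseMonoid S] {e : S} (he : e * e = e) :
    bsup e (bcompl e) = 1 := BooleanInverseMonoid.sup_compl e he

private lemma restr_inv [InverseMonoidWithZero S] (x : S) {g : S} (hg : g * g = g) :
    (x * g)⁻¹ = g * x⁻¹ := by
  have hc : ∀ z : S, g * ((x⁻¹ * x) * z) = (x⁻¹ * x) * (g * z) := by
    intro z
    rw [← mul_assoc, idem_comm hg (dIdem x), mul_assoc]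
  have h1 : (x * g) * (g * x⁻¹) * (x * g) = x * g := by
    calc (x * g) * (g * x⁻¹) * (x * g)
        = x * (g * ((x⁻¹ * x) * g)) := by
          simp only [mul_assoc]; rw [absorb hg, ← mul_assoc x⁻¹ x g]
      _ = x * ((x⁻¹ * x) * (g * g)) := by rw [hc]
      _ = x * x⁻¹ * x * g := by rw [hg]; simp only [mul_assoc]
      _ = x * g := by rw [mii]
  have h2 : (g * x⁻¹) * (x * g) * (g * x⁻¹) = g * x⁻¹ := by
    calc (g * x⁻¹) * (x * g) * (g * x⁻¹)
        = g * ((x⁻¹ * x) * (g * (g * x⁻¹))) := by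
          simp only [mul_assoc]
      _ = g * ((x⁻¹ * x) * (g * x⁻¹)) := by rw [absorb hg]
      _ = (x⁻¹ * x) * (g * (g * x⁻¹)) := by rw [hc]
      _ = (x⁻¹ * x) * (g * x⁻¹) := by rw [absorb hg]
      _ = g * ((x⁻¹ * x) * x⁻¹) := by rw [← hc]
      _ = g * x⁻¹ := by rw [imi]
  exact (InverseMonoidWithZero.inv_unique _ _ h1 h2).symm

private lemma restr_d [InverseMonoidWithZero S] (x : S) {g : S} (hg : g * g = g) :
    (x * g)⁻¹ * (x * g) = (x⁻¹ * x) * g := by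
  rw [restr_inv x hg]
  calc (g * x⁻¹) * (x * g) = g * ((x⁻¹ * x) * g) := by
        simp only [mul_assoc]
      _ = (x⁻¹ * x) * (g * g) := by
        rw [← mul_assoc, idem_comm hg (dIdem x), mul_assoc]
      _ = (x⁻¹ * x) * g := by rw [hg]

private lemma restr_r [InverseMonoidWithZero S] (x : S) {g : S} (hg : g * g = g) :
    (x * g) * (x * g)⁻¹ = x * g * x⁻¹ := by
  rw [restr_inv x hg]
  calc (x * g) * (g * x⁻¹) = x * (g * (g * x⁻¹)) := by simp only [mul_assoc]
    _ = x * (g * x⁻¹) := by rw [absorb hg]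
    _ = x * g * x⁻¹ := by rw [mul_assoc]

private lemma restr_r_idem [InverseMonoidWithZero S] (x : S) {g : S} (hg : g * g = g) :
    (x * g * x⁻¹) * (x * g * x⁻¹) = x * g * x⁻¹ := by
  rw [← restr_r x hg]; exact rIdem (x * g)

private lemma restr_r_nle [InverseMonoidWithZero S] (x : S) {g : S} (hg : g * g = g) :
    nle ((x * g) * (x * g)⁻¹) (x * x⁻¹) := by
  rw [restr_r x hg]
  refine nle_of_mul_eq (restr_r_idem x hg) ?_
  calc (x * g * x⁻¹) * (x * x⁻¹)
      = x * (g * ((x⁻¹ * x) * x⁻¹)) := by simp only [mul_assoc]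
    _ = x * ((x⁻¹ * x) * (g * x⁻¹)) := by
        rw [← mul_assoc g, idem_comm hg (dIdem x), mul_assoc]
    _ = x * x⁻¹ * x * (g * x⁻¹) := by simp only [mul_assoc]
    _ = x * g * x⁻¹ := by rw [mii, mul_assoc]

private lemma idem_mul_nle_left [InverseMonoidWithZero S] {u g : S} (hu : u * u = u)
    (hg : g * g = g) : nle (u * g) u := ⟨g, hg, idem_comm hu hg⟩

end Aux

/-- Orthogonalization: restrict each element to the complement of the join of
the previously seen domains (accumulated in the second argument). -/
def buildList {S : Type u} [BooleanInverseMeetMonoid S] : List S → S → List S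
  | [], _ => []
  | x :: t, a => (x * bcompl a) :: buildList t (bsup a (x⁻¹ * x))

section BuildLemmas

variable {S : Type u} [BooleanInverseMeetMonoid S]

private lemma build_ne {l : List S} (h : l ≠ []) (a : S) : buildList l a ≠ [] := by
  cases l with
  | nil => exact absurd rfl h
  | cons x t => simp [buildList]

private lemma build_r_le {f : S} : ∀ (l : List S) (a : S), a * a = a →
    (∀ x ∈ l, nle (x * x⁻¹) f) → ∀ y ∈ buildList l a, nle (y * y⁻¹) f := by
  intro l
  induction l with
  | nil => intro a _ _ y hy; simp [buildList] at hy
  | cons x t ih =>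
    intro a ha hr y hy
    simp only [buildList, List.mem_cons] at hy
    rcases hy with rfl | hy
    · exact nle_trans (restr_r_nle x (bcompl_idem ha)) (hr x List.mem_cons_self)
    · exact ih (bsup a (x⁻¹ * x)) (bsup_idem ha (dIdem x))
        (fun z hz => hr z (List.mem_cons_of_mem x hz)) y hy

private lemma build_d_le {e : S} : ∀ (l : List S) (a : S), a * a = a →
    (∀ x ∈ l, nle (x⁻¹ * x) e) → ∀ y ∈ buildList l a, nle (y⁻¹ * y) e := by
  intro l
  induction l with
  | nil => intro a _ _ y hy; simp [buildList] at hy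
  | cons x t ih =>
    intro a ha hd y hy
    simp only [buildList, List.mem_cons] at hy
    rcases hy with rfl | hy
    · rw [restr_d x (bcompl_idem ha)]
      exact nle_trans (idem_mul_nle_left (dIdem x) (bcompl_idem ha))
        (hd x List.mem_cons_self)
    · exact ih (bsup a (x⁻¹ * x)) (bsup_idem ha (dIdem x))
        (fun z hz => hd z (List.mem_cons_of_mem x hz)) y hy

private lemma build_upper {c : S} : ∀ (l : List S) (a : S), a * a = a → nle a c →
    (∀ y ∈ buildList l a, nle (y⁻¹ * y) c) → ∀ x ∈ l, nle (x⁻¹ * x) c := by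
  intro l
  induction l with
  | nil => intro a _ _ _ x hx; simp at hx
  | cons x t ih =>
    intro a ha hac hy z hz
    have hgi : bcompl a * bcompl a = bcompl a := bcompl_idem ha
    have hdx : (x⁻¹ * x) * (x⁻¹ * x) = x⁻¹ * x := dIdem x
    have hxc : nle (x⁻¹ * x) c := by
      have hsplit : x⁻¹ * x = bsup ((x⁻¹ * x) * a) ((x⁻¹ * x) * bcompl a) := by
        have h := DistributiveInverseMonoid.mul_sup a (bcompl a) (x⁻¹ * x)
          (idem_compat ha hgi)
        rw [show DistributiveInverseMonoid.sup a (bcompl a) = bsup a (bcompl a) from rfl,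
          bsup_bcompl ha, mul_one] at h
        exact h
      rw [hsplit]
      refine bsup_nle (idem_mul_idem hdx ha) (idem_mul_idem hdx hgi) ?_ ?_
      · exact nle_trans (⟨x⁻¹ * x, hdx, rfl⟩ : nle ((x⁻¹ * x) * a) a) hac
      · have hmem : x * bcompl a ∈ buildList (x :: t) a := by
          simp [buildList]
        have h := hy (x * bcompl a) hmem
        rw [restr_d x hgi] at h
        exact h
    rcases List.mem_cons.mp hz with rfl | hz'
    · exact hxc
    · exact ih (bsup a (x⁻¹ * x)) (bsup_idem ha hdx)
        (bsup_nle ha hdx hac hxc)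
        (fun y hy' => hy y (by simp only [buildList, List.mem_cons]; exact Or.inr hy'))
        z hz'

private lemma build_orth : ∀ (l : List S) (a : S), a * a = a →
    (∀ y ∈ buildList l a, (y⁻¹ * y) * a = 0) ∧
      ((buildList l a).map (fun y => y⁻¹ * y)).Pairwise (fun u v => u * v = 0) := by
  intro l
  induction l with
  | nil => intro a _; exact ⟨by intro y hy; simp [buildList] at hy, by simp [buildList]⟩
  | cons x t ih =>
    intro a ha
    have hgi : bcompl a * bcompl a = bcompl a := bcompl_idem ha
    have hdx : (x⁻¹ * x) * (x⁻¹ * x) = x⁻¹ * x := dIdem x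
    have ha' : bsup a (x⁻¹ * x) * bsup a (x⁻¹ * x) = bsup a (x⁻¹ * x) := bsup_idem ha hdx
    obtain ⟨H1, H2⟩ := ih (bsup a (x⁻¹ * x)) ha'
    have hdy0 : (x * bcompl a)⁻¹ * (x * bcompl a) = (x⁻¹ * x) * bcompl a := restr_d x hgi
    have hdy0i : ((x⁻¹ * x) * bcompl a) * ((x⁻¹ * x) * bcompl a) = (x⁻¹ * x) * bcompl a :=
      idem_mul_idem hdx hgi
    -- d(y₀) ≤ a'
    have hle : nle ((x⁻¹ * x) * bcompl a) (bsup a (x⁻¹ * x)) :=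
      nle_trans (idem_mul_nle_left hdx hgi) (nle_bsup_right ha hdx)
    have hda' : ((x⁻¹ * x) * bcompl a) * bsup a (x⁻¹ * x) = (x⁻¹ * x) * bcompl a :=
      mul_eq_of_nle ha' hle
    -- head kills a
    have c1 : ((x⁻¹ * x) * bcompl a) * a = 0 := by
      rw [mul_assoc, ← idem_comm ha hgi, mul_bcompl ha,
        InverseMonoidWithZero.mul_zero']
    -- a ≤ a'
    have haa' : a * bsup a (x⁻¹ * x) = a := mul_eq_of_nle ha' (nle_bsup_left ha hdx)
    have c2 : ∀ z ∈ buildList t (bsup a (x⁻¹ * x)), (z⁻¹ * z) * a = 0 := by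
      intro z hz
      have h0 := H1 z hz
      have : a = bsup a (x⁻¹ * x) * a := by
        rw [← idem_comm ha ha', haa']
      rw [this, ← mul_assoc, h0, InverseMonoidWithZero.zero_mul']
    have c3 : ∀ z ∈ buildList t (bsup a (x⁻¹ * x)),
        ((x⁻¹ * x) * bcompl a) * (z⁻¹ * z) = 0 := by
      intro z hz
      calc ((x⁻¹ * x) * bcompl a) * (z⁻¹ * z)
          = (((x⁻¹ * x) * bcompl a) * bsup a (x⁻¹ * x)) * (z⁻¹ * z) := by rw [hda']
        _ = ((x⁻¹ * x) * bcompl a) * (bsup a (x⁻¹ * x) * (z⁻¹ * z)) := by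
            rw [mul_assoc]
        _ = ((x⁻¹ * x) * bcompl a) * ((z⁻¹ * z) * bsup a (x⁻¹ * x)) := by
            rw [idem_comm ha' (dIdem z)]
        _ = ((x⁻¹ * x) * bcompl a) * 0 := by rw [H1 z hz]
        _ = 0 := InverseMonoidWithZero.mul_zero' _
    constructor
    · intro y hy
      rcases List.mem_cons.mp hy with rfl | hy'
      · rw [hdy0]; exact c1
      · exact c2 y hy'
    · simp only [buildList, List.map_cons]
      refine List.Pairwise.cons ?_ H2
      intro v hv
      obtain ⟨z, hz, rfl⟩ := List.mem_map.mp hv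
      rw [hdy0]
      exact c3 z hz

end BuildLemmas

/-- In a Tarski monoid, if `e ⪯ f` for non-zero idempotents
`e, f`, then there is a pencil `x₁, …, xₘ` from `e` to `f` whose domain
idempotents `d(xᵢ)` are pairwise orthogonal: `r(xᵢ) ≤ f` for all `i` and
`e = ⋁ d(xᵢ)` is an orthogonal join. -/
theorem statement16 (S : Type u) [BooleanInverseMeetMonoid S] [Countable S]
    (hat : IdemAtomless S)
    (e f : S) (he : e * e = e) (hne : e ≠ 0) (hf : f * f = f) (hnf : f ≠ 0)
    (hpre : Preceq e f) :
    ∃ l : List S, l ≠ [] ∧ (∀ x ∈ l, nle (x * x⁻¹) f) ∧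
      (∀ x ∈ l, nle (x⁻¹ * x) e) ∧
      (∀ c : S, (∀ x ∈ l, nle (x⁻¹ * x) c) → nle e c) ∧
      (l.map fun x => x⁻¹ * x).Pairwise (fun u v => u * v = 0) := by
  obtain ⟨l, hl, hr, hd, hub⟩ := hpre
  refine ⟨buildList l 0, build_ne hl 0, build_r_le l 0 zero_idem hr,
    build_d_le l 0 zero_idem hd, ?_, ?_⟩
  · intro c hc
    exact hub c (build_upper l 0 zero_idem (zero_nle c) hc)
  · exact (build_orth l 0 zero_idem).2
end
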